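/- Suppose L is a free A-module with a finite basis (Z_α)_{α∈ι}, let ρ : L →ₗ[A] L be A-linear, and let ∇ be the Weitzenböck operator ∇_X Y := ∑_α (ρ(X) Y^α) • Z_α, where Y = ∑_α Y^α • Z_α. Let g : L →ₗ[A] L →ₗ[A] A be an A-bilinear form whose values on the basis are constants: g(Z_α, Z_β) = (algebraMap ℝ A)(c α β) for some c : ι → ι → ℝ. Then ∇ is compatible with g: for all X, Y₁, Y₂ ∈ L, ρ(X)(g(Y₁, Y₂)) = g(∇_X Y₁, Y₂) + g(Y₁, ∇_X Y₂). -/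

import Mathlib

open scoped BigOperators

/-- A (parity-sign-free) quasi-connection on the module `L = Derivation ℝ A A` of
vector fields: an `A`-linear anchor `ρ` together with an `ℝ`-bilinear map `∇`
satisfying `∇_{f•X} Y = f • ∇_X Y` and `∇_X (f•Y) = (ρ(X) f) • Y + f • ∇_X Y`. -/
def IsQuasiConnection {A : Type*} [CommRing A] [Algebra ℝ A]
    (nabla : Derivation ℝ A A → Derivation ℝ A A → Derivation ℝ A A)
    (rho : Derivation ℝ A A →ₗ[A] Derivation ℝ A A) : Prop :=
  (∀ X X' Y, nabla (X + X') Y = nabla X Y + nabla X' Y) ∧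
  (∀ (c : ℝ) (X Y), nabla (c • X) Y = c • nabla X Y) ∧
  (∀ X Y Y', nabla X (Y + Y') = nabla X Y + nabla X Y') ∧
  (∀ (c : ℝ) (X Y), nabla X (c • Y) = c • nabla X Y) ∧
  (∀ (f : A) (X Y), nabla (f • X) Y = f • nabla X Y) ∧
  (∀ (f : A) (X Y), nabla X (f • Y) = rho X f • Y + f • nabla X Y)

/-- The torsion `T(X,Y) := ∇_X Y − ∇_Y X − ρ(⁅ρ(X), ρ(Y)⁆)` of a quasi-connection. -/
def qcTorsion {A : Type*} [CommRing A] [Algebra ℝ A]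
    (nabla : Derivation ℝ A A → Derivation ℝ A A → Derivation ℝ A A)
    (rho : Derivation ℝ A A →ₗ[A] Derivation ℝ A A)
    (X Y : Derivation ℝ A A) : Derivation ℝ A A :=
  nabla X Y - nabla Y X - rho ⁅rho X, rho Y⁆

/-- The curvature `R(X,Y)Z := ∇_X(∇_Y Z) − ∇_Y(∇_X Z) − ∇_{ρ(⁅ρ(X), ρ(Y)⁆)} Z`. -/
def qcCurvature {A : Type*} [CommRing A] [Algebra ℝ A]
    (nabla : Derivation ℝ A A → Derivation ℝ A A → Derivation ℝ A A)
    (rho : Derivation ℝ A A →ₗ[A] Derivation ℝ A A)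
    (X Y Z : Derivation ℝ A A) : Derivation ℝ A A :=
  nabla X (nabla Y Z) - nabla Y (nabla X Z) - nabla (rho ⁅rho X, rho Y⁆) Z

/-- An affine connection on `L = Derivation ℝ A A`. -/
def IsAffineConnection {A : Type*} [CommRing A] [Algebra ℝ A]
    (nabla : Derivation ℝ A A → Derivation ℝ A A → Derivation ℝ A A) : Prop :=
  (∀ X X' Y, nabla (X + X') Y = nabla X Y + nabla X' Y) ∧
  (∀ (c : ℝ) (X Y), nabla (c • X) Y = c • nabla X Y) ∧
  (∀ X Y Y', nabla X (Y + Y') = nabla X Y + nabla X Y') ∧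
  (∀ (c : ℝ) (X Y), nabla X (c • Y) = c • nabla X Y) ∧
  (∀ (f : A) (X Y), nabla (f • X) Y = f • nabla X Y) ∧
  (∀ (f : A) (X Y), nabla X (f • Y) = X f • Y + f • nabla X Y)

/-- Proposition 2.43 (sign-free form): the Weitzenböck operator is compatible with
any `A`-bilinear form whose values on the parallelisation are constants (in
particular with the induced odd Riemannian metric of Definition 2.42). -/
theorem weitzenboeck_compatible_with_constant_metric {A : Type*} [CommRing A] [Algebra ℝ A]
    {ι : Type*} [Fintype ι]
    (b : Module.Basis ι A (Derivation ℝ A A))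
    (rho : Derivation ℝ A A →ₗ[A] Derivation ℝ A A)
    (g : Derivation ℝ A A →ₗ[A] Derivation ℝ A A →ₗ[A] A)
    (c : ι → ι → ℝ)
    (hg : ∀ α β, g (b α) (b β) = algebraMap ℝ A (c α β)) :
    ∀ X Y₁ Y₂ : Derivation ℝ A A,
      rho X (g Y₁ Y₂) =
        g (∑ α, rho X (b.repr Y₁ α) • b α) Y₂ +
        g Y₁ (∑ α, rho X (b.repr Y₂ α) • b α) := by
  intro X Y₁ Y₂
  have main : ∀ f h : ι → A,
      rho X (g (∑ α, f α • b α) (∑ β, h β • b β)) =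
        g (∑ α, rho X (f α) • b α) (∑ β, h β • b β) +
        g (∑ α, f α • b α) (∑ β, rho X (h β) • b β) := by
    intro f h
    simp only [map_sum, map_smul, LinearMap.sum_apply, LinearMap.smul_apply, hg,
      smul_eq_mul]
    rw [← Finset.sum_add_distrib]
    refine Finset.sum_congr rfl fun α _ => ?_
    have hsum : rho X (∑ x, f x * algebraMap ℝ A (c x α)) =
        ∑ x, rho X (f x) * algebraMap ℝ A (c x α) := by
      rw [map_sum]
      refine Finset.sum_congr rfl fun β _ => ?_
      rw [Derivation.leibniz]
      simp [Derivation.map_algebraMap, mul_comm]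
    rw [Derivation.leibniz, hsum]
    simp only [smul_eq_mul]
    ring
  have := main (fun α => b.repr Y₁ α) (fun β => b.repr Y₂ β)
  simpa [b.sum_repr Y₁, b.sum_repr Y₂] using this
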